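/- Let (A_n) be a sequence of d×d complex matrices such that the Cesàro means (1/n)·Σ_{k=0}^{n-1} A_k converge to a matrix A, and such that the sequence ((1/n)·Σ_{k=0}^{n} ‖A_k‖)_{n≥1} is bounded (for some fixed matrix norm). Then for every complex number t, the product Π_n(t) = (I_d + (t/n)A_0)(I_d + (t/n)A_1)⋯(I_d + (t/n)A_n) converges, as n → ∞, to the matrix exponential exp(tA). -/

import Mathlib

open Filter Topology

attribute [local instance] Matrix.linftyOpNormedAddCommGroup Matrix.linftyOpNormedRing
attribute [local instance] Matrix.linftyOpNormedAlgebra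

open Nat

section MyRingLemmas
variable {R : Type*} [Ring R]

/-- Telescoping identity for products vs powers. -/
lemma my_telescope (B : ℕ → R) (E : R) :
    ∀ N : ℕ, ((List.range N).map B).prod - E ^ N =
      ∑ m ∈ Finset.range N,
        E ^ m * (B m - E) * ((List.range' (m + 1) (N - 1 - m)).map B).prod
  | 0 => by simp
  | (N + 1) => by
    have IH := my_telescope B E N
    rw [Finset.sum_range_succ]
    have h2 : ∀ m ∈ Finset.range N,
        E ^ m * (B m - E) * ((List.range' (m + 1) (N + 1 - 1 - m)).map B).prod
          = E ^ m * (B m - E) * ((List.range' (m + 1) (N - 1 - m)).map B).prod * B N := by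
      intro m hm
      have hm' := Finset.mem_range.1 hm
      have hsub : N + 1 - 1 - m = (N - 1 - m) + 1 := by omega
      have hend : m + 1 + (N - 1 - m) = N := by omega
      rw [hsub, List.range'_1_concat, hend, List.map_append, List.prod_append,
        List.map_singleton, List.prod_singleton]
      simp [mul_assoc]
    rw [Finset.sum_congr rfl h2, ← Finset.sum_mul, ← IH]
    have h3 : (N + 1 - 1 - N) = 0 := by omega
    rw [h3]
    have h4 : List.range (N + 1) = List.range N ++ [N] := by
      rw [List.range_succ]
    rw [h4, List.map_append, List.prod_append, List.map_singleton, List.prod_singleton,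
      pow_succ]
    simp only [List.range'_zero, List.map_nil, List.prod_nil, mul_one]
    noncomm_ring

lemma my_term_identity (E G b R' : R) (m : ℕ) :
    E ^ m * G * (b * R') - E ^ (m + 1) * G * R'
      = E ^ m * (G * ((b - 1) * R')) + E ^ m * ((1 - E) * (G * R')) := by
  rw [pow_succ]
  noncomm_ring

/-- Abel summation identity. -/
lemma my_abel (L D Rr : ℕ → R) (N : ℕ) :
    (∑ m ∈ Finset.range (N + 1), L m * D m * Rr m) =
      L N * (∑ j ∈ Finset.range (N + 1), D j) * Rr N
        + ∑ m ∈ Finset.range N,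
            (L m * (∑ j ∈ Finset.range (m + 1), D j) * Rr m
              - L (m + 1) * (∑ j ∈ Finset.range (m + 1), D j) * Rr (m + 1)) := by
  induction N with
  | zero => simp
  | succ N IH =>
    rw [Finset.sum_range_succ (f := fun m => L m * D m * Rr m), IH,
      Finset.sum_range_succ (f := fun m =>
        L m * (∑ j ∈ Finset.range (m + 1), D j) * Rr m
          - L (m + 1) * (∑ j ∈ Finset.range (m + 1), D j) * Rr (m + 1)),
      Finset.sum_range_succ D (N + 1), Finset.sum_range_succ D N]
    noncomm_ring

end MyRingLemmas

section MyExpLemmas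
variable {𝔸 : Type*} [NormedRing 𝔸] [NormedAlgebra ℂ 𝔸] [CompleteSpace 𝔸] [NormOneClass 𝔸]

lemma my_real_exp_tsum (y : ℝ) : Real.exp y = ∑' n : ℕ, y ^ n / (n ! : ℝ) := by
  rw [Real.exp_eq_exp_ℝ, NormedSpace.exp_eq_tsum_div]

omit [CompleteSpace 𝔸] in
lemma my_term_bound (x : 𝔸) (n : ℕ) : ‖((n ! : ℂ))⁻¹ • x ^ n‖ ≤ ‖x‖ ^ n / (n ! : ℝ) := by
  rw [norm_smul, norm_inv, RCLike.norm_natCast, div_eq_inv_mul]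
  exact mul_le_mul_of_nonneg_left (norm_pow_le x n) (by positivity)

lemma my_norm_exp_le (x : 𝔸) : ‖NormedSpace.exp x‖ ≤ Real.exp ‖x‖ := by
  rw [NormedSpace.exp_eq_tsum ℂ, my_real_exp_tsum]
  refine (norm_tsum_le_tsum_norm (NormedSpace.norm_expSeries_summable' x)).trans ?_
  exact Summable.tsum_le_tsum (my_term_bound x) (NormedSpace.norm_expSeries_summable' x)
    (Real.summable_pow_div_factorial ‖x‖)

lemma my_exp_remainder (x : 𝔸) :
    ‖NormedSpace.exp x - 1 - x‖ ≤ ‖x‖ ^ 2 * Real.exp ‖x‖ := by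
  have hsum := NormedSpace.expSeries_summable' (𝕂 := ℂ) x
  have h2 := Summable.sum_add_tsum_nat_add (f := fun n => ((n ! : ℂ))⁻¹ • x ^ n) 2 hsum
  have hfin : (∑ i ∈ Finset.range 2, ((i ! : ℂ))⁻¹ • x ^ i) = 1 + x := by
    simp [Finset.sum_range_succ]
  have hx : NormedSpace.exp x - 1 - x = ∑' n : ℕ, ((((n + 2) ! : ℂ)))⁻¹ • x ^ (n + 2) := by
    simp only [NormedSpace.exp_eq_tsum ℂ]
    rw [← h2, hfin]
    abel
  rw [hx]
  have hsum2 : Summable fun n : ℕ => ‖(((n + 2)! : ℂ))⁻¹ • x ^ (n + 2)‖ :=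
    (summable_nat_add_iff 2).2 (NormedSpace.norm_expSeries_summable' (𝕂 := ℂ) x)
  have hRHS : Summable fun n : ℕ => ‖x‖ ^ 2 * (‖x‖ ^ n / (n ! : ℝ)) :=
    (Real.summable_pow_div_factorial ‖x‖).mul_left _
  refine (norm_tsum_le_tsum_norm hsum2).trans ?_
  have hterm : ∀ n : ℕ, ‖(((n + 2)! : ℂ))⁻¹ • x ^ (n + 2)‖ ≤ ‖x‖ ^ 2 * (‖x‖ ^ n / (n ! : ℝ)) := by
    intro n
    refine (my_term_bound x (n + 2)).trans ?_
    rw [pow_add, mul_comm (‖x‖ ^ n), mul_div_assoc]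
    refine mul_le_mul_of_nonneg_left ?_ (by positivity)
    refine div_le_div_of_nonneg_left (by positivity) (by positivity) ?_
    exact_mod_cast Nat.factorial_le (by omega)
  refine (Summable.tsum_le_tsum hterm hsum2 hRHS).trans ?_
  rw [tsum_mul_left, ← my_real_exp_tsum]

omit [NormedAlgebra ℂ 𝔸] [CompleteSpace 𝔸] in
lemma my_pow_sub_pow (a b : 𝔸) (M : ℝ) (ha : ‖a‖ ≤ M) (hb : ‖b‖ ≤ M) :
    ∀ n : ℕ, ‖a ^ n - b ^ n‖ ≤ n * M ^ (n - 1) * ‖a - b‖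
  | 0 => by simp
  | (n + 1) => by
    have hM : 0 ≤ M := le_trans (norm_nonneg a) ha
    have IH := my_pow_sub_pow a b M ha hb n
    have key : a ^ (n + 1) - b ^ (n + 1) = a ^ n * (a - b) + (a ^ n - b ^ n) * b := by
      noncomm_ring
    rw [key]
    refine (norm_add_le _ _).trans ?_
    have h1 : ‖a ^ n * (a - b)‖ ≤ M ^ n * ‖a - b‖ := by
      refine (norm_mul_le _ _).trans ?_
      exact mul_le_mul_of_nonneg_right
        ((norm_pow_le a n).trans (pow_le_pow_left₀ (norm_nonneg a) ha n)) (norm_nonneg _)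
    have h2 : ‖(a ^ n - b ^ n) * b‖ ≤ (n * M ^ (n - 1) * ‖a - b‖) * M := by
      refine (norm_mul_le _ _).trans ?_
      exact mul_le_mul IH hb (norm_nonneg _) (by positivity)
    refine (add_le_add h1 h2).trans ?_
    have hstep : (n : ℝ) * M ^ (n - 1) * ‖a - b‖ * M ≤ (n : ℝ) * M ^ n * ‖a - b‖ := by
      rcases Nat.eq_zero_or_pos n with h | h
      · subst h; simp
      · have hMn : M ^ (n - 1) * M = M ^ n := by
          rw [← pow_succ]; congr 1; omega
        apply le_of_eq
        rw [← hMn]; ring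
    refine (add_le_add_right hstep _).trans_eq ?_
    have hn1 : n + 1 - 1 = n := rfl
    rw [hn1]
    push_cast
    ring

lemma my_nat_inv_complex : Tendsto (fun n : ℕ => ((n : ℂ))⁻¹) atTop (𝓝 0) := by
  have h1 : Tendsto (fun n : ℕ => ((n : ℝ))⁻¹) atTop (𝓝 0) :=
    tendsto_inv_atTop_nhds_zero_nat
  have h2 := (Complex.continuous_ofReal.tendsto 0).comp h1
  simpa [Function.comp_def] using h2

lemma my_pow_tendsto_exp (x : 𝔸) :
    Tendsto (fun n : ℕ => (1 + (n : ℂ)⁻¹ • x) ^ (n + 1)) atTop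
      (𝓝 (NormedSpace.exp x)) := by
  letI : NormedAlgebra ℚ 𝔸 := NormedAlgebra.restrictScalars ℚ ℂ 𝔸
  have hc : Tendsto (fun n : ℕ => ((n : ℂ) + 1) / (n : ℂ)) atTop (𝓝 1) := by
    have h : Tendsto (fun n : ℕ => 1 + (n : ℂ)⁻¹) atTop (𝓝 (1 + 0)) :=
      tendsto_const_nhds.add my_nat_inv_complex
    rw [add_zero] at h
    refine h.congr' ?_
    filter_upwards [eventually_ge_atTop 1] with n hn
    have hne : (n : ℂ) ≠ 0 := Nat.cast_ne_zero.2 (by omega)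
    field_simp
  have hexp : Tendsto (fun n : ℕ => NormedSpace.exp ((((n : ℂ) + 1) / (n : ℂ)) • x))
      atTop (𝓝 (NormedSpace.exp x)) := by
    have h1 : Tendsto (fun n : ℕ => (((n : ℂ) + 1) / (n : ℂ)) • x) atTop (𝓝 ((1 : ℂ) • x)) :=
      hc.smul_const x
    rw [one_smul] at h1
    exact (NormedSpace.exp_continuous.tendsto x).comp h1
  have hdiff : Tendsto (fun n : ℕ =>
      (1 + (n : ℂ)⁻¹ • x) ^ (n + 1) - NormedSpace.exp ((((n : ℂ) + 1) / (n : ℂ)) • x))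
      atTop (𝓝 0) := by
    set C := ‖x‖ ^ 2 * (Real.exp ‖x‖ * Real.exp ‖x‖) with hC
    have hC0 : 0 ≤ C := by positivity
    apply squeeze_zero_norm' (a := fun n : ℕ => (2 * C) / n)
    · filter_upwards [eventually_ge_atTop 1] with n hn
      have hn0 : (0 : ℝ) < n := by exact_mod_cast hn
      have hne : (n : ℂ) ≠ 0 := Nat.cast_ne_zero.2 (by omega)
      set y := (n : ℂ)⁻¹ • x with hy
      have hny : ‖y‖ = ‖x‖ / n := by
        rw [hy, norm_smul, norm_inv, Complex.norm_natCast, inv_mul_eq_div]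
      have hrw : NormedSpace.exp ((((n : ℂ) + 1) / (n : ℂ)) • x)
          = (NormedSpace.exp y) ^ (n + 1) := by
        rw [← NormedSpace.exp_nsmul]
        congr 1
        rw [hy, ← Nat.cast_smul_eq_nsmul ℂ, smul_smul]
        congr 1
        push_cast
        rw [div_eq_mul_inv]
      rw [hrw]
      set M := Real.exp (‖x‖ / n) with hM
      have hMx : Real.exp ‖y‖ = M := by rw [hny]
      have ha : ‖1 + y‖ ≤ M := by
        refine (norm_add_le _ _).trans ?_
        rw [norm_one, ← hMx]
        have := Real.add_one_le_exp ‖y‖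
        linarith
      have hb : ‖NormedSpace.exp y‖ ≤ M := hMx ▸ my_norm_exp_le y
      have hkey := my_pow_sub_pow (1 + y) (NormedSpace.exp y) M ha hb (n + 1)
      have hab : ‖1 + y - NormedSpace.exp y‖ ≤ ‖y‖ ^ 2 * M := by
        have h1 : 1 + y - NormedSpace.exp y = -(NormedSpace.exp y - 1 - y) := by abel
        rw [h1, norm_neg, ← hMx]
        exact my_exp_remainder y
      have hMn : M ^ ((n + 1) - 1) = Real.exp ‖x‖ := by
        have h : (n + 1) - 1 = n := rfl
        rw [h, hM, ← Real.exp_nat_mul]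
        congr 1
        field_simp
      refine hkey.trans ?_
      rw [hMn]
      have hMle : M ≤ Real.exp ‖x‖ := by
        rw [hM]
        apply Real.exp_le_exp.2
        rw [div_le_iff₀ hn0]
        have hn1 : (1 : ℝ) ≤ n := by exact_mod_cast hn
        nlinarith [norm_nonneg x]
      calc ((n + 1 : ℕ) : ℝ) * Real.exp ‖x‖ * ‖1 + y - NormedSpace.exp y‖
          ≤ ((n + 1 : ℕ) : ℝ) * Real.exp ‖x‖ * (‖y‖ ^ 2 * M) := by
            refine mul_le_mul_of_nonneg_left hab ?_
            positivity
        _ ≤ ((n + 1 : ℕ) : ℝ) * Real.exp ‖x‖ * ((‖x‖ / n) ^ 2 * Real.exp ‖x‖) := by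
            refine mul_le_mul_of_nonneg_left ?_ (by positivity)
            rw [hny]
            exact mul_le_mul_of_nonneg_left hMle (by positivity)
        _ = (((n : ℝ) + 1) / n ^ 2) * C := by
            rw [hC, div_pow]
            push_cast
            ring
        _ ≤ (2 * C) / n := by
            have hn1 : (1 : ℝ) ≤ n := by exact_mod_cast hn
            rw [div_mul_eq_mul_div, div_le_div_iff₀ (by positivity) hn0]
            nlinarith [mul_nonneg (mul_nonneg hC0 hn0.le) (sub_nonneg.2 hn1)]
    · exact tendsto_const_div_atTop_nhds_zero_nat (2 * C)
  have hfin := hdiff.add hexp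
  rw [zero_add] at hfin
  refine hfin.congr (fun n => by abel)

omit [CompleteSpace 𝔸] in
lemma my_list_prod_bound (z : ℂ) (A : ℕ → 𝔸) :
    ∀ l : List ℕ, ‖(l.map (fun k => 1 + z • A k)).prod‖
      ≤ Real.exp (‖z‖ * (l.map (fun k => ‖A k‖)).sum)
  | [] => by simp
  | k :: l => by
    have IH := my_list_prod_bound z A l
    simp only [List.map_cons, List.prod_cons, List.sum_cons]
    refine (norm_mul_le _ _).trans ?_
    rw [mul_add, Real.exp_add]
    have h1 : ‖1 + z • A k‖ ≤ Real.exp (‖z‖ * ‖A k‖) := by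
      refine (norm_add_le _ _).trans ?_
      rw [norm_one, norm_smul]
      linarith [Real.add_one_le_exp (‖z‖ * ‖A k‖)]
    exact mul_le_mul h1 IH (norm_nonneg _) (Real.exp_nonneg _)

end MyExpLemmas

lemma my_cesaro_weight (u w : ℕ → ℝ) (hu : ∀ m, 0 ≤ u m) (hw : ∀ m, 0 ≤ w m)
    (htend : Tendsto (fun m : ℕ => u m / (m + 1)) atTop (𝓝 0))
    (C : ℝ) (hC0 : 0 ≤ C) (hC : ∀ n : ℕ, (∑ m ∈ Finset.range n, w m) ≤ C * n) :
    Tendsto (fun n : ℕ => (∑ m ∈ Finset.range n, u m * w m) / (n : ℝ) ^ 2) atTop (𝓝 0) := by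
  rw [Metric.tendsto_atTop]
  intro ε hε
  set ε' := ε / (2 * (C + 1)) with hε'def
  have hε' : 0 < ε' := by positivity
  obtain ⟨m₀, hm₀⟩ := (Metric.tendsto_atTop.1 htend) ε' hε'
  set K := ∑ m ∈ Finset.range m₀, u m with hK
  have hK0 : 0 ≤ K := Finset.sum_nonneg fun m _ => hu m
  have key : ∀ m : ℕ, u m ≤ ε' * (m + 1) + K := by
    intro m
    rcases le_or_gt m₀ m with h | h
    · have h2 := hm₀ m h
      rw [Real.dist_eq, sub_zero, abs_of_nonneg (div_nonneg (hu m) (by positivity))] at h2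
      have h3 : u m ≤ ε' * (m + 1) := by
        rw [div_lt_iff₀ (by positivity)] at h2
        linarith
      linarith
    · have h1 : u m ≤ K := Finset.single_le_sum (fun i _ => hu i) (Finset.mem_range.2 h)
      nlinarith [hε'.le, Nat.cast_nonneg (α := ℝ) m]
  have main : ∀ n : ℕ, 1 ≤ n → (∑ m ∈ Finset.range n, u m * w m) / (n : ℝ) ^ 2
      ≤ ε' * C + K * C / n := by
    intro n hn
    have hn0 : (0 : ℝ) < n := by exact_mod_cast hn
    have h1 : (∑ m ∈ Finset.range n, u m * w m) ≤ (ε' * n + K) * ∑ m ∈ Finset.range n, w m := by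
      rw [Finset.mul_sum]
      refine Finset.sum_le_sum fun m hm => ?_
      have hmn : (m : ℝ) + 1 ≤ n := by
        have := Finset.mem_range.1 hm
        exact_mod_cast this
      refine mul_le_mul_of_nonneg_right ((key m).trans ?_) (hw m)
      have : ε' * ((m : ℝ) + 1) ≤ ε' * n := mul_le_mul_of_nonneg_left hmn hε'.le
      linarith
    have h2 : (ε' * n + K) * ∑ m ∈ Finset.range n, w m ≤ (ε' * n + K) * (C * n) := by
      refine mul_le_mul_of_nonneg_left (hC n) ?_
      positivity
    rw [div_le_iff₀ (by positivity)]
    calc (∑ m ∈ Finset.range n, u m * w m) ≤ (ε' * n + K) * (C * n) := h1.trans h2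
      _ = (ε' * C + K * C / n) * n ^ 2 := by field_simp
  have hlim : Tendsto (fun n : ℕ => ε' * C + K * C / n) atTop (𝓝 (ε' * C + 0)) :=
    tendsto_const_nhds.add (tendsto_const_div_atTop_nhds_zero_nat (K * C))
  have hlt : ε' * C + 0 < ε := by
    rw [add_zero, hε'def]
    rw [div_mul_eq_mul_div, div_lt_iff₀ (by positivity)]
    nlinarith
  obtain ⟨N, hN⟩ := eventually_atTop.1 (Filter.Tendsto.eventually_lt_const hlt hlim)
  refine ⟨max N 1, fun n hn => ?_⟩
  have hn1 : 1 ≤ n := le_trans (le_max_right _ _) hn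
  have hnN : N ≤ n := le_trans (le_max_left _ _) hn
  rw [Real.dist_eq, sub_zero, abs_of_nonneg (div_nonneg
    (Finset.sum_nonneg fun m _ => mul_nonneg (hu m) (hw m)) (by positivity))]
  exact lt_of_le_of_lt (main n hn1) (hN n hnN)

lemma my_norm_mul2 {𝔸 : Type*} [NormedRing 𝔸] (x y : 𝔸) (X Y : ℝ)
    (hx : ‖x‖ ≤ X) (hy : ‖y‖ ≤ Y) (hX : 0 ≤ X) : ‖x * y‖ ≤ X * Y :=
  (norm_mul_le _ _).trans (mul_le_mul hx hy (norm_nonneg _) hX)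

set_option maxHeartbeats 1000000 in
/-- For a sequence of `d × d` complex matrices whose Cesàro means converge to `A` and whose
norms have bounded Cesàro means, the products `(I + (t/n) A₀) ⋯ (I + (t/n) Aₙ)` converge to
`exp (t A)`. -/
theorem statement0 {d : ℕ} (A : ℕ → Matrix (Fin d) (Fin d) ℂ) (Alim : Matrix (Fin d) (Fin d) ℂ)
    (hCesaro : Tendsto (fun n : ℕ => ((n : ℂ)⁻¹) • ∑ k ∈ Finset.range n, A k)
      atTop (𝓝 Alim))
    (α : ℝ)
    (hBdd : ∀ n : ℕ, 1 ≤ n → (n : ℝ)⁻¹ * ∑ k ∈ Finset.range (n + 1), ‖A k‖ ≤ α)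
    (t : ℂ) :
    Tendsto
      (fun n : ℕ =>
        ((List.range (n + 1)).map (fun k => (1 : Matrix (Fin d) (Fin d) ℂ) + (t / n) • A k)).prod)
      atTop (𝓝 (NormedSpace.exp (t • Alim))) := by
  rcases Nat.eq_zero_or_pos d with hd | hd
  · subst hd
    exact tendsto_const_nhds.congr fun n => (Subsingleton.elim _ _)
  haveI : Nonempty (Fin d) := ⟨⟨0, hd⟩⟩
  set c : ℝ := ‖t‖ with hc
  set a : ℝ := ‖Alim‖ with ha
  set CE : ℝ := Real.exp (c * a) with hCE
  set CR : ℝ := Real.exp (c * α) with hCR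
  have hc0 : 0 ≤ c := norm_nonneg t
  have ha0 : 0 ≤ a := norm_nonneg Alim
  have hCE0 : 0 ≤ CE := Real.exp_nonneg _
  have hCR0 : 0 ≤ CR := Real.exp_nonneg _
  have hα0 : 0 ≤ α := by
    refine le_trans ?_ (hBdd 1 le_rfl)
    have : (0:ℝ) ≤ ∑ k ∈ Finset.range 2, ‖A k‖ :=
      Finset.sum_nonneg fun k _ => norm_nonneg _
    simpa using this
  set T : ℕ → Matrix (Fin d) (Fin d) ℂ := fun m => ∑ j ∈ Finset.range m, (A j - Alim)
    with hT_def
  set u : ℕ → ℝ := fun m => ‖T (m + 1)‖ with hu_def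
  set w : ℕ → ℝ := fun m => ‖A (m + 1)‖ + a with hw_def
  have hu0 : ∀ m, 0 ≤ u m := fun m => norm_nonneg _
  have hw0 : ∀ m, 0 ≤ w m := fun m => add_nonneg (norm_nonneg _) ha0
  -- Cesàro convergence in the form we need
  have hTnorm : ∀ k : ℕ, 1 ≤ k →
      ‖(k : ℂ)⁻¹ • (∑ j ∈ Finset.range k, A j) - Alim‖ = ‖T k‖ / k := by
    intro k hk
    have hk0 : (k : ℂ) ≠ 0 := Nat.cast_ne_zero.2 (by omega)
    have e1 : T k = (∑ j ∈ Finset.range k, A j) - (k : ℂ) • Alim := by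
      simp only [hT_def]
      rw [Finset.sum_sub_distrib, Finset.sum_const, Finset.card_range,
        Nat.cast_smul_eq_nsmul]
    have e2 : (k : ℂ)⁻¹ • (∑ j ∈ Finset.range k, A j) - Alim = (k : ℂ)⁻¹ • T k := by
      rw [e1, smul_sub, smul_smul, inv_mul_cancel₀ hk0, one_smul]
    rw [e2, norm_smul, norm_inv, Complex.norm_natCast, inv_mul_eq_div]
  have hcesaro0 : Tendsto
      (fun k : ℕ => ‖(k : ℂ)⁻¹ • (∑ j ∈ Finset.range k, A j) - Alim‖) atTop (𝓝 0) := by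
    have h0 := hCesaro.sub (tendsto_const_nhds (x := Alim))
    rw [sub_self] at h0
    simpa using h0.norm
  have hv : Tendsto (fun k : ℕ => ‖T k‖ / k) atTop (𝓝 0) := by
    refine hcesaro0.congr' ?_
    filter_upwards [eventually_ge_atTop 1] with k hk
    exact hTnorm k hk
  have hu_div : Tendsto (fun m : ℕ => u m / ((m : ℝ) + 1)) atTop (𝓝 0) := by
    have h1 := hv.comp (tendsto_add_atTop_nat 1)
    refine h1.congr fun m => ?_
    simp only [Function.comp_apply, hu_def]
    push_cast
    rfl
  -- bound on partial sums of norms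
  have hAsum : ∀ n : ℕ, 1 ≤ n → (∑ k ∈ Finset.range (n + 1), ‖A k‖) ≤ α * n := by
    intro n hn
    have hn0 : (0:ℝ) < n := by exact_mod_cast hn
    have h1 := mul_le_mul_of_nonneg_left (hBdd n hn) hn0.le
    rw [← mul_assoc, mul_inv_cancel₀ hn0.ne', one_mul] at h1
    linarith
  have hsumw : ∀ n : ℕ, (∑ m ∈ Finset.range n, w m) ≤ (α + a) * n := by
    intro n
    rcases Nat.eq_zero_or_pos n with h | h
    · subst h; simp
    have h2 : (∑ k ∈ Finset.range (n+1), ‖A k‖)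
        = (∑ m ∈ Finset.range n, ‖A (m+1)‖) + ‖A 0‖ :=
      Finset.sum_range_succ' (fun k => ‖A k‖) n
    have h1 : (∑ m ∈ Finset.range n, ‖A (m + 1)‖) ≤ α * n := by
      have h3 : (0:ℝ) ≤ ‖A 0‖ := norm_nonneg _
      have := hAsum n h
      linarith
    have h4 : (∑ m ∈ Finset.range n, w m)
        = (∑ m ∈ Finset.range n, ‖A (m+1)‖) + n * a := by
      simp only [hw_def]
      rw [Finset.sum_add_distrib, Finset.sum_const, Finset.card_range, nsmul_eq_mul]
    rw [h4]
    nlinarith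
  -- the key quantitative bound
  have hbound : ∀ n : ℕ, 1 ≤ n →
      ‖((List.range (n + 1)).map
            (fun k => (1 : Matrix (Fin d) (Fin d) ℂ) + (t / n) • A k)).prod
          - ((1 : Matrix (Fin d) (Fin d) ℂ) + (t / n) • Alim) ^ (n + 1)‖
        ≤ (CE * CR * (2 * c)) * (u n / ((n : ℝ) + 1))
          + (CE * CR * c ^ 2) * ((∑ m ∈ Finset.range n, u m * w m) / (n : ℝ) ^ 2) := by
    intro n hn
    have hn0 : (0 : ℝ) < n := by exact_mod_cast hn
    set z : ℂ := t / n with hz_def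
    set B : ℕ → Matrix (Fin d) (Fin d) ℂ := fun k => 1 + z • A k with hB_def
    set E : Matrix (Fin d) (Fin d) ℂ := 1 + z • Alim with hE_def
    have hznorm : ‖z‖ = c / n := by
      rw [hz_def, norm_div, Complex.norm_natCast, hc]
    have htel := my_telescope B E (n + 1)
    simp only [Nat.add_sub_cancel] at htel
    have habel := my_abel (fun m => E ^ m) (fun m => B m - E)
      (fun m => ((List.range' (m + 1) (n - m)).map B).prod) n
    have hG : ∀ m : ℕ, (∑ j ∈ Finset.range (m + 1), (B j - E)) = z • T (m + 1) := by
      intro m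
      have h1 : ∀ j, B j - E = z • (A j - Alim) := by
        intro j
        simp only [hB_def, hE_def, add_sub_add_left_eq_sub, smul_sub]
      simp only [h1, hT_def, ← Finset.smul_sum]
    simp only [hG] at habel
    -- norm estimates
    have hEpow : ∀ m : ℕ, m ≤ n → ‖E ^ m‖ ≤ CE := by
      intro m hm
      have hsm : ‖z • Alim‖ = c * a / n := by
        rw [norm_smul, hznorm, ← ha]; ring
      have h1 : ‖E‖ ≤ Real.exp (c * a / n) := by
        calc ‖E‖ ≤ ‖(1 : Matrix (Fin d) (Fin d) ℂ)‖ + ‖z • Alim‖ := norm_add_le _ _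
          _ = 1 + c * a / n := by rw [norm_one, hsm]
          _ ≤ Real.exp (c * a / n) := by linarith [Real.add_one_le_exp (c * a / n)]
      have hmn : (m : ℝ) ≤ n := by exact_mod_cast hm
      calc ‖E ^ m‖ ≤ ‖E‖ ^ m := norm_pow_le E m
        _ ≤ Real.exp (c * a / n) ^ m := pow_le_pow_left₀ (norm_nonneg E) h1 m
        _ = Real.exp ((m : ℝ) * (c * a / n)) := (Real.exp_nat_mul _ m).symm
        _ ≤ Real.exp (c * a) := by
            apply Real.exp_le_exp.2
            have e1 : (m : ℝ) * (c * a / n) = (m * (c * a)) / n := by ring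
            rw [e1, div_le_iff₀ hn0]
            nlinarith [mul_nonneg (mul_nonneg hc0 ha0) (sub_nonneg.2 hmn)]
    have hRnorm : ∀ m : ℕ, m ≤ n →
        ‖((List.range' (m + 1) (n - m)).map B).prod‖ ≤ CR := by
      intro m hm
      have hb := my_list_prod_bound z A (List.range' (m + 1) (n - m))
      rw [hB_def]
      refine hb.trans ?_
      rw [hCR]
      apply Real.exp_le_exp.2
      have happ := List.range'_append_1 (s := 0) (m := m + 1) (n := n - m)
      simp only [Nat.zero_add] at happ
      have hlen : m + 1 + (n - m) = n + 1 := by omega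
      rw [hlen] at happ
      have hnn1 : (0:ℝ) ≤ ((List.range' 0 (m+1)).map fun k => ‖A k‖).sum :=
        List.sum_nonneg (fun x hx => by
          obtain ⟨k, -, rfl⟩ := List.mem_map.1 hx; exact norm_nonneg _)
      have hlistle : ((List.range' (m + 1) (n - m)).map (fun k => ‖A k‖)).sum
          ≤ ∑ k ∈ Finset.range (n + 1), ‖A k‖ := by
        have hsplit : (((List.range (n + 1)).map (fun k => ‖A k‖)).sum : ℝ)
            = ((List.range' 0 (m+1)).map fun k => ‖A k‖).sum
              + ((List.range' (m + 1) (n - m)).map (fun k => ‖A k‖)).sum := by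
          rw [List.range_eq_range', ← happ, List.map_append, List.sum_append]
        have hfin : (((List.range (n + 1)).map (fun k => ‖A k‖)).sum : ℝ)
            = ∑ k ∈ Finset.range (n + 1), ‖A k‖ := rfl
        rw [← hfin]
        linarith [hsplit]
      have hnn2 : (0:ℝ) ≤ ((List.range' (m + 1) (n - m)).map fun k => ‖A k‖).sum :=
        List.sum_nonneg (fun x hx => by
          obtain ⟨k, -, rfl⟩ := List.mem_map.1 hx; exact norm_nonneg _)
      have h5 := hlistle.trans (hAsum n hn)
      rw [hznorm, div_mul_eq_mul_div, div_le_iff₀ hn0]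
      nlinarith
    have hRstep : ∀ m : ℕ, m < n →
        ((List.range' (m + 1) (n - m)).map B).prod
          = B (m + 1) * ((List.range' (m + 1 + 1) (n - (m + 1))).map B).prod := by
      intro m hm
      have h1 : n - m = (n - (m + 1)) + 1 := by omega
      rw [h1, List.range'_succ, List.map_cons, List.prod_cons]
    -- the generic term bound
    have hterm : ∀ m ∈ Finset.range n,
        ‖E ^ m * (z • T (m + 1)) * ((List.range' (m + 1) (n - m)).map B).prod
            - E ^ (m + 1) * (z • T (m + 1))
              * ((List.range' (m + 1 + 1) (n - (m + 1))).map B).prod‖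
          ≤ (CE * CR * c ^ 2 / (n : ℝ) ^ 2) * (u m * w m) := by
      intro m hm
      have hmn := Finset.mem_range.1 hm
      set R' : Matrix (Fin d) (Fin d) ℂ :=
        ((List.range' (m + 1 + 1) (n - (m + 1))).map B).prod with hR'_def
      set G : Matrix (Fin d) (Fin d) ℂ := z • T (m + 1) with hG'_def
      rw [hRstep m hmn, my_term_identity E G (B (m + 1)) R' m]
      have hGnorm : ‖G‖ ≤ (c / n) * u m := by
        rw [hG'_def, norm_smul, hznorm, hu_def]
      have hXnorm : ‖B (m + 1) - 1‖ ≤ (c / n) * ‖A (m + 1)‖ := by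
        simp only [hB_def, add_sub_cancel_left]
        rw [norm_smul, hznorm]
      have hYnorm : ‖(1 : Matrix (Fin d) (Fin d) ℂ) - E‖ ≤ (c / n) * a := by
        have h1 : (1 : Matrix (Fin d) (Fin d) ℂ) - E = -(z • Alim) := by
          rw [hE_def]; abel
        rw [h1, norm_neg, norm_smul, hznorm, ha]
      have hR'norm : ‖R'‖ ≤ CR := hRnorm (m + 1) (by omega)
      have hEm : ‖E ^ m‖ ≤ CE := hEpow m (by omega)
      have hcn0 : (0:ℝ) ≤ c / n := by positivity
      have hfirst : ‖E ^ m * (G * ((B (m + 1) - 1) * R'))‖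
          ≤ CE * (((c / n) * u m) * (((c / n) * ‖A (m + 1)‖) * CR)) := by
        refine my_norm_mul2 _ _ _ _ hEm ?_ hCE0
        refine my_norm_mul2 _ _ _ _ hGnorm ?_ (by positivity)
        exact my_norm_mul2 _ _ _ _ hXnorm hR'norm (by positivity)
      have hsecond : ‖E ^ m * ((1 - E) * (G * R'))‖
          ≤ CE * (((c / n) * a) * (((c / n) * u m) * CR)) := by
        refine my_norm_mul2 _ _ _ _ hEm ?_ hCE0
        refine my_norm_mul2 _ _ _ _ hYnorm ?_ (by positivity)
        exact my_norm_mul2 _ _ _ _ hGnorm hR'norm (by positivity)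
      refine (norm_add_le _ _).trans ?_
      refine (add_le_add hfirst hsecond).trans ?_
      apply le_of_eq
      simp only [hw_def]
      field_simp
    -- boundary term bound
    have hbd : ‖E ^ n * (z • T (n + 1)) * ((List.range' (n + 1) (n - n)).map B).prod‖
        ≤ (CE * CR * (2 * c)) * (u n / ((n : ℝ) + 1)) := by
      have hGnorm : ‖z • T (n + 1)‖ ≤ (c / n) * u n := by
        rw [norm_smul, hznorm, hu_def]
      have h1 : ‖E ^ n * (z • T (n + 1)) * ((List.range' (n + 1) (n - n)).map B).prod‖
          ≤ CE * (((c / n) * u n) * CR) := by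
        rw [mul_assoc]
        refine my_norm_mul2 _ _ _ _ (hEpow n le_rfl) ?_ hCE0
        exact my_norm_mul2 _ _ _ _ hGnorm (hRnorm n le_rfl) (by positivity)
      refine h1.trans ?_
      have h2 : (1:ℝ) / n ≤ 2 / ((n:ℝ) + 1) := by
        have hn1 : (1:ℝ) ≤ n := by exact_mod_cast hn
        rw [div_le_div_iff₀ hn0 (by positivity)]
        linarith
      have h3 : CE * (((c / n) * u n) * CR) = (CE * CR * c * u n) * ((1:ℝ)/n) := by
        field_simp
      have h4 : (CE * CR * (2 * c)) * (u n / ((n : ℝ) + 1))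
          = (CE * CR * c * u n) * ((2:ℝ)/((n:ℝ)+1)) := by
        field_simp
      rw [h3, h4]
      refine mul_le_mul_of_nonneg_left h2 ?_
      have := hu0 n
      positivity
    -- put everything together
    rw [htel, habel]
    refine (norm_add_le _ _).trans ?_
    refine add_le_add hbd ?_
    refine (norm_sum_le _ _).trans ?_
    refine (Finset.sum_le_sum hterm).trans ?_
    rw [← Finset.mul_sum]
    apply le_of_eq
    field_simp
  -- limit of the comparison powers
  have hpow : Tendsto
      (fun n : ℕ => ((1 : Matrix (Fin d) (Fin d) ℂ) + (t / n) • Alim) ^ (n + 1)) atTop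
      (𝓝 (NormedSpace.exp (t • Alim))) := by
    have h := my_pow_tendsto_exp (t • Alim)
    refine h.congr fun n => ?_
    congr 2
    rw [smul_smul, div_eq_mul_inv, mul_comm]
  -- main squeeze
  have hmain : Tendsto
      (fun n : ℕ =>
        ((List.range (n + 1)).map
            (fun k => (1 : Matrix (Fin d) (Fin d) ℂ) + (t / n) • A k)).prod
          - ((1 : Matrix (Fin d) (Fin d) ℂ) + (t / n) • Alim) ^ (n + 1)) atTop (𝓝 0) := by
    apply squeeze_zero_norm' (a := fun n : ℕ =>
      (CE * CR * (2 * c)) * (u n / ((n : ℝ) + 1))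
        + (CE * CR * c ^ 2) * ((∑ m ∈ Finset.range n, u m * w m) / (n : ℝ) ^ 2))
    · filter_upwards [eventually_ge_atTop 1] with n hn
      exact hbound n hn
    · have h1 := hu_div.const_mul (CE * CR * (2 * c))
      have h2 := (my_cesaro_weight u w hu0 hw0 hu_div (α + a) (by positivity)
        hsumw).const_mul (CE * CR * c ^ 2)
      have h3 := h1.add h2
      simpa using h3
  have hfin := hmain.add hpow
  rw [zero_add] at hfin
  exact hfin.congr fun n => by abel
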